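/- arXiv:2604.26932 — 2 statements merged into one kernel-verified Lean document; each statement's English description precedes it below -/
import Mathlib

section
/- Let H be a real Hilbert space, Q a positive definite bounded self-adjoint operator, and F : H → H firmly nonexpansive in the Q-inner product, i.e. ‖F(x)−F(y)‖_Q² ≤ ⟨x−y, F(x)−F(y)⟩_Q for all x,y. Let Γ be a bounded self-adjoint operator with 0 ≺ Γ ⪯ α_max·I for some 0 < α_max < 2, commuting with Q, and set H_metric := Q·Γ^{-1} and S := I − Γ∘F. Then for all x, y: ‖S(x)−S(y)‖²_{H_metric} ≤ ‖x−y‖²_{H_metric} − (2/α_max − 1)·‖(I−S)(x)−(I−S)(y)‖²_{H_metric}. -/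
open RealInnerProductSpace Filter

private def iterB {H : Type*} [NormedAddCommGroup H] [InnerProductSpace ℝ H]
    (A : H →L[ℝ] H) : ℕ → H →L[ℝ] H
  | 0 => A
  | n + 1 => iterB A n - iterB A n ∘L iterB A n

-- product of commuting positive operators is positive
lemma pos_mul_pos_aux {H : Type*} [NormedAddCommGroup H] [InnerProductSpace ℝ H]
    (Q A : H →L[ℝ] H)
    (hQsa : ∀ x y : H, ⟪Q x, y⟫ = ⟪x, Q y⟫) (hQ0 : ∀ x : H, 0 ≤ ⟪x, Q x⟫)
    (hAsa : ∀ x y : H, ⟪A x, y⟫ = ⟪x, A y⟫)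
    (hA0 : ∀ x : H, 0 ≤ ⟪A x, x⟫) (hA1 : ∀ x : H, ⟪A x, x⟫ ≤ ‖x‖ ^ 2)
    (hAQ : A ∘L Q = Q ∘L A) (w : H) : 0 ≤ ⟪A (Q w), w⟫ := by
  set B : ℕ → H →L[ℝ] H := iterB A with hB
  have hBsucc : ∀ n, B (n + 1) = B n - B n ∘L B n := fun n => rfl
  -- invariant
  have inv : ∀ n, (∀ x y : H, ⟪B n x, y⟫ = ⟪x, B n y⟫) ∧ (∀ x : H, 0 ≤ ⟪B n x, x⟫) ∧
      (∀ x : H, ⟪B n x, x⟫ ≤ ‖x‖ ^ 2) ∧ (B n ∘L Q = Q ∘L B n) := by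
    intro n
    induction n with
    | zero => exact ⟨hAsa, hA0, hA1, hAQ⟩
    | succ n ih =>
      obtain ⟨hsa, h0, h1, hc⟩ := ih
      refine ⟨?_, ?_, ?_, ?_⟩
      · intro x y
        simp only [hBsucc, ContinuousLinearMap.sub_apply, ContinuousLinearMap.comp_apply,
          inner_sub_left, inner_sub_right, hsa]
      · intro x
        have e : ⟪B (n+1) x, x⟫ =
            (⟪B n x, B n x⟫ - ⟪B n (B n x), B n x⟫) + ⟪B n (x - B n x), x - B n x⟫ := by
          simp only [hBsucc, ContinuousLinearMap.sub_apply, ContinuousLinearMap.comp_apply,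
            map_sub, inner_sub_left, inner_sub_right]
          ring
        have t1 : ⟪B n (B n x), B n x⟫ ≤ ‖B n x‖ ^ 2 := h1 _
        have t1' : ⟪B n x, B n x⟫ = ‖B n x‖ ^ 2 := real_inner_self_eq_norm_sq _
        have t2 : 0 ≤ ⟪B n (x - B n x), x - B n x⟫ := h0 _
        linarith
      · intro x
        have e : ⟪B (n+1) x, x⟫ = ⟪B n x, x⟫ - ⟪B n x, B n x⟫ := by
          simp only [hBsucc, ContinuousLinearMap.sub_apply, ContinuousLinearMap.comp_apply,
            inner_sub_left]
          rw [hsa (B n x) x]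
        have t1 : (0:ℝ) ≤ ⟪B n x, B n x⟫ := real_inner_self_nonneg
        have t2 := h1 x
        linarith
      · ext x
        have hc' : ∀ z, B n (Q z) = Q (B n z) := fun z =>
          congrFun (congrArg DFunLike.coe hc) z
        simp only [hBsucc, ContinuousLinearMap.comp_apply, ContinuousLinearMap.sub_apply,
          map_sub, hc']
  have step : ∀ n, ⟪B (n+1) (Q w), w⟫ = ⟪B n (Q w), w⟫ - ⟪B n w, Q (B n w)⟫ := by
    intro n
    obtain ⟨hsa, h0, h1, hc⟩ := inv n
    have hc' : ∀ z, B n (Q z) = Q (B n z) := fun z => congrFun (congrArg DFunLike.coe hc) z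
    have key : ⟪B n (B n (Q w)), w⟫ = ⟪B n w, Q (B n w)⟫ := by
      rw [hsa (B n (Q w)) w, hc', real_inner_comm]
    simp only [hBsucc, ContinuousLinearMap.sub_apply, ContinuousLinearMap.comp_apply,
      inner_sub_left, key]
  have anti : ∀ n, ⟪B (n+1) (Q w), w⟫ ≤ ⟪B n (Q w), w⟫ := by
    intro n; rw [step n]; linarith [hQ0 (B n w)]
  have lower : ∀ n, ⟪B n (Q w), w⟫ ≤ ⟪A (Q w), w⟫ := by
    intro n
    induction n with
    | zero => exact le_of_eq rfl
    | succ n ih => exact le_trans (anti n) ih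
  have bstep : ∀ n, ‖B n w‖ ^ 2 = ⟪B n w, w⟫ - ⟪B (n+1) w, w⟫ := by
    intro n
    obtain ⟨hsa, h0, h1, hc⟩ := inv n
    have key : ⟪B n (B n w), w⟫ = ‖B n w‖ ^ 2 := by
      rw [hsa, ← real_inner_self_eq_norm_sq, real_inner_comm]
    simp only [hBsucc, ContinuousLinearMap.sub_apply, ContinuousLinearMap.comp_apply,
      inner_sub_left, key]
    ring
  have banti : Antitone (fun n => ⟪B n w, w⟫) := by
    apply antitone_nat_of_succ_le
    intro n
    have := bstep n
    nlinarith [sq_nonneg ‖B n w‖]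
  have bbdd : BddBelow (Set.range fun n => ⟪B n w, w⟫) := by
    refine ⟨0, ?_⟩
    rintro _ ⟨n, rfl⟩
    exact (inv n).2.1 w
  have bconv : Tendsto (fun n => ⟪B n w, w⟫) atTop (nhds (⨅ n, ⟪B n w, w⟫)) :=
    tendsto_atTop_ciInf banti bbdd
  have bconv' : Tendsto (fun n => ⟪B (n+1) w, w⟫) atTop (nhds (⨅ n, ⟪B n w, w⟫)) :=
    bconv.comp (tendsto_add_atTop_nat 1)
  have hsq0 : Tendsto (fun n => ‖B n w‖ ^ 2) atTop (nhds 0) := by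
    have h := bconv.sub bconv'
    rw [sub_self] at h
    exact h.congr fun n => (bstep n).symm
  have hnorm0 : Tendsto (fun n => ‖B n w‖) atTop (nhds 0) := by
    have := hsq0.sqrt
    simpa [Real.sqrt_sq (norm_nonneg _)] using this
  have final : ∀ n, -(‖Q w‖ * ‖B n w‖) ≤ ⟪A (Q w), w⟫ := by
    intro n
    obtain ⟨hsa, _, _, _⟩ := inv n
    have cs : |⟪Q w, B n w⟫| ≤ ‖Q w‖ * ‖B n w‖ := abs_real_inner_le_norm _ _
    have e : ⟪B n (Q w), w⟫ = ⟪Q w, B n w⟫ := hsa (Q w) w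
    have := lower n
    linarith [neg_abs_le ⟪Q w, B n w⟫]
  have lim : Tendsto (fun n => -(‖Q w‖ * ‖B n w‖)) atTop (nhds 0) := by
    have := (hnorm0.const_mul ‖Q w‖).neg
    simpa using this
  exact le_of_tendsto' lim final

theorem stmt_0 {H : Type*} [NormedAddCommGroup H] [InnerProductSpace ℝ H]
    (Q Γ Γinv : H →L[ℝ] H) (F S : H → H) (αmax : ℝ)
    (hα0 : 0 < αmax) (hα2 : αmax < 2)
    (hQsa : ∀ x y : H, ⟪Q x, y⟫ = ⟪x, Q y⟫) (hQpos : ∀ x : H, x ≠ 0 → 0 < ⟪x, Q x⟫)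
    (hΓsa : ∀ x y : H, ⟪Γ x, y⟫ = ⟪x, Γ y⟫) (hΓpos : ∀ x : H, x ≠ 0 → 0 < ⟪x, Γ x⟫)
    (hΓle : ∀ x : H, ⟪x, Γ x⟫ ≤ αmax * ‖x‖ ^ 2)
    (hcomm : Q ∘L Γ = Γ ∘L Q)
    (hinv1 : Γ ∘L Γinv = ContinuousLinearMap.id ℝ H)
    (hinv2 : Γinv ∘L Γ = ContinuousLinearMap.id ℝ H)
    (hF : ∀ x y : H, ⟪F x - F y, Q (F x - F y)⟫ ≤ ⟪x - y, Q (F x - F y)⟫)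
    (hS : ∀ x : H, S x = x - Γ (F x)) :
    ∀ x y : H,
      ⟪S x - S y, (Q ∘L Γinv) (S x - S y)⟫ ≤
        ⟪x - y, (Q ∘L Γinv) (x - y)⟫ -
          (2 / αmax - 1) *
            ⟪(x - S x) - (y - S y), (Q ∘L Γinv) ((x - S x) - (y - S y))⟫ := by
  intro x y
  have hQ0 : ∀ z : H, 0 ≤ ⟪z, Q z⟫ := by
    intro z
    rcases eq_or_ne z 0 with h | h
    · simp [h]
    · exact (hQpos z h).le
  have hΓ0 : ∀ z : H, 0 ≤ ⟪z, Γ z⟫ := by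
    intro z
    rcases eq_or_ne z 0 with h | h
    · simp [h]
    · exact (hΓpos z h).le
  have hcomm' : ∀ z, Q (Γ z) = Γ (Q z) := fun z => congrFun (congrArg DFunLike.coe hcomm) z
  have hinv1' : ∀ z, Γ (Γinv z) = z := fun z => congrFun (congrArg DFunLike.coe hinv1) z
  have hinv2' : ∀ z, Γinv (Γ z) = z := fun z => congrFun (congrArg DFunLike.coe hinv2) z
  -- Γinv commutes with Q
  have hcommi : ∀ z, Γinv (Q z) = Q (Γinv z) := by
    intro z
    have : Γinv (Q (Γ (Γinv z))) = Γinv (Γ (Q (Γinv z))) := by rw [hcomm']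
    rwa [hinv1' z, hinv2'] at this
  -- Γinv self-adjoint
  have hΓisa : ∀ u v : H, ⟪Γinv u, v⟫ = ⟪u, Γinv v⟫ := by
    intro u v
    calc ⟪Γinv u, v⟫ = ⟪Γinv u, Γ (Γinv v)⟫ := by rw [hinv1']
    _ = ⟪Γ (Γinv u), Γinv v⟫ := (hΓsa _ _).symm
    _ = ⟪u, Γinv v⟫ := by rw [hinv1']
  -- M := Q ∘L Γinv self-adjoint
  have hMsa : ∀ u v : H, ⟪Q (Γinv u), v⟫ = ⟪u, Q (Γinv v)⟫ := by
    intro u v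
    rw [hQsa, ← hcommi, hΓisa]
  -- key inequality : ⟪Γ w, Q w⟫ ≤ αmax * ⟪w, Q w⟫
  have key : ∀ w : H, ⟪Γ w, Q w⟫ ≤ αmax * ⟪w, Q w⟫ := by
    intro w
    set A : H →L[ℝ] H := ContinuousLinearMap.id ℝ H - αmax⁻¹ • Γ with hA
    have hAapp : ∀ z, A z = z - αmax⁻¹ • Γ z := fun z => rfl
    have hAsa : ∀ u v : H, ⟪A u, v⟫ = ⟪u, A v⟫ := by
      intro u v
      simp only [hAapp, inner_sub_left, inner_sub_right, real_inner_smul_left,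
        real_inner_smul_right, hΓsa]
    have hA0 : ∀ z : H, 0 ≤ ⟪A z, z⟫ := by
      intro z
      have h1 := hΓle z
      have h2 : ⟪Γ z, z⟫ = ⟪z, Γ z⟫ := real_inner_comm _ _
      simp only [hAapp, inner_sub_left, real_inner_smul_left, real_inner_self_eq_norm_sq]
      rw [h2]
      have : αmax⁻¹ * ⟪z, Γ z⟫ ≤ αmax⁻¹ * (αmax * ‖z‖ ^ 2) := by
        apply mul_le_mul_of_nonneg_left h1 (by positivity)
      rw [← mul_assoc, inv_mul_cancel₀ hα0.ne', one_mul] at this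
      linarith
    have hA1 : ∀ z : H, ⟪A z, z⟫ ≤ ‖z‖ ^ 2 := by
      intro z
      have h1 := hΓ0 z
      have h2 : ⟪Γ z, z⟫ = ⟪z, Γ z⟫ := real_inner_comm _ _
      simp only [hAapp, inner_sub_left, real_inner_smul_left, real_inner_self_eq_norm_sq]
      rw [h2]
      have : 0 ≤ αmax⁻¹ * ⟪z, Γ z⟫ := by positivity
      linarith
    have hAQ : A ∘L Q = Q ∘L A := by
      ext z
      simp only [ContinuousLinearMap.comp_apply, hAapp, map_sub, map_smul, hcomm']
    have := pos_mul_pos_aux Q A hQsa hQ0 hAsa hA0 hA1 hAQ w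
    have e : ⟪A (Q w), w⟫ = ⟪Q w, w⟫ - αmax⁻¹ * ⟪Γ (Q w), w⟫ := by
      simp only [hAapp, inner_sub_left, real_inner_smul_left]
    have e2 : ⟪Γ (Q w), w⟫ = ⟪Γ w, Q w⟫ := by
      rw [← hcomm', hQsa, real_inner_comm]
    have e3 : ⟪Q w, w⟫ = ⟪w, Q w⟫ := real_inner_comm _ _
    rw [e, e2, e3] at this
    have h4 : αmax⁻¹ * ⟪Γ w, Q w⟫ ≤ ⟪w, Q w⟫ := by linarith
    calc ⟪Γ w, Q w⟫ = αmax * (αmax⁻¹ * ⟪Γ w, Q w⟫) := by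
          rw [← mul_assoc, mul_inv_cancel₀ hα0.ne', one_mul]
    _ ≤ αmax * ⟪w, Q w⟫ := mul_le_mul_of_nonneg_left h4 hα0.le
  -- main algebra
  set u := x - y with hu
  set w := F x - F y with hw
  have hSdiff : S x - S y = u - Γ w := by
    rw [hS x, hS y, hu, hw, map_sub]; abel
  have hIdiff : (x - S x) - (y - S y) = Γ w := by
    rw [hS x, hS y, hw, map_sub]; abel
  rw [hSdiff, hIdiff]
  simp only [ContinuousLinearMap.comp_apply]
  have hMΓ : ∀ z, Q (Γinv (Γ z)) = Q z := fun z => by rw [hinv2']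
  -- expand LHS
  have cross : ⟪Γ w, Q (Γinv u)⟫ = ⟪u, Q w⟫ := by
    rw [real_inner_comm, hMsa u (Γ w), hMΓ]
  have cross2 : ⟪u, Q (Γinv (Γ w))⟫ = ⟪u, Q w⟫ := by rw [hMΓ]
  have diag : ⟪Γ w, Q (Γinv (Γ w))⟫ = ⟪Γ w, Q w⟫ := by rw [hMΓ]
  have expand : ⟪u - Γ w, Q (Γinv (u - Γ w))⟫ =
      ⟪u, Q (Γinv u)⟫ - 2 * ⟪u, Q w⟫ + ⟪Γ w, Q w⟫ := by
    rw [map_sub Γinv, map_sub Q, inner_sub_left, inner_sub_right, inner_sub_right,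
      cross, cross2, diag]
    ring
  rw [expand, diag]
  -- reduce to: (2/αmax) * ⟪Γ w, Q w⟫ ≤ 2 * ⟪u, Q w⟫
  have hFw : ⟪w, Q w⟫ ≤ ⟪u, Q w⟫ := hF x y
  have hkey := key w
  have hQw0 : 0 ≤ ⟪w, Q w⟫ := hQ0 w
  have h5 : 2 / αmax * ⟪Γ w, Q w⟫ ≤ 2 * ⟪w, Q w⟫ := by
    rw [div_mul_eq_mul_div, div_le_iff₀ hα0]
    calc 2 * ⟪Γ w, Q w⟫ ≤ 2 * (αmax * ⟪w, Q w⟫) := by linarith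
    _ = 2 * ⟪w, Q w⟫ * αmax := by ring
  nlinarith [h5, hFw]
end

section
/- Let f : ℝ^n → ℝ and g : ℝ^m → ℝ be convex, A : ℝ^n → ℝ^p, B : ℝ^m → ℝ^p linear, c ∈ ℝ^p. Suppose 0 ∈ ∂f(x̂) + Aᵀ(λ̂ + μ̂) and 0 ∈ ∂g(ẑ) + Bᵀλ̂ for some x̂, ẑ, λ̂, μ̂, and let (x*, z*) satisfy A x* + B z* = c. Then f(x̂) + g(ẑ) − f(x*) − g(z*) ≤ −⟨λ̂, A x̂ + B ẑ − c⟩ − ⟨μ̂, A x̂ − A x*⟩. -/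
open scoped Matrix

/-- `v` is a subgradient of `f` at `x` (convex subdifferential). -/
def IsSubgradientAt {n : ℕ} (f : (Fin n → ℝ) → ℝ) (v x : Fin n → ℝ) : Prop :=
  ∀ w, f x + (v ⬝ᵥ (w - x)) ≤ f w

theorem stmt_16 {n m p : ℕ} (f : (Fin n → ℝ) → ℝ) (g : (Fin m → ℝ) → ℝ)
    (hf : ConvexOn ℝ Set.univ f) (hg : ConvexOn ℝ Set.univ g)
    (A : Matrix (Fin p) (Fin n) ℝ) (B : Matrix (Fin p) (Fin m) ℝ)
    (c : Fin p → ℝ)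
    (xhat : Fin n → ℝ) (zhat : Fin m → ℝ) (lhat mhat : Fin p → ℝ)
    (xstar : Fin n → ℝ) (zstar : Fin m → ℝ)
    (hx : IsSubgradientAt f (-(Aᵀ *ᵥ (lhat + mhat))) xhat)
    (hz : IsSubgradientAt g (-(Bᵀ *ᵥ lhat)) zhat)
    (hfeas : A *ᵥ xstar + B *ᵥ zstar = c) :
    f xhat + g zhat - f xstar - g zstar ≤
      -(lhat ⬝ᵥ (A *ᵥ xhat + B *ᵥ zhat - c)) -
        (mhat ⬝ᵥ (A *ᵥ xhat - A *ᵥ xstar)) := by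
  have h1 := hx xstar
  have h2 := hz zstar
  have e1 : (Aᵀ *ᵥ (lhat + mhat)) ⬝ᵥ (xstar - xhat)
      = (lhat + mhat) ⬝ᵥ (A *ᵥ (xstar - xhat)) := by
    rw [Matrix.mulVec_transpose, ← Matrix.dotProduct_mulVec]
  have e2 : (Bᵀ *ᵥ lhat) ⬝ᵥ (zstar - zhat)
      = lhat ⬝ᵥ (B *ᵥ (zstar - zhat)) := by
    rw [Matrix.mulVec_transpose, ← Matrix.dotProduct_mulVec]
  rw [neg_dotProduct, e1] at h1
  rw [neg_dotProduct, e2] at h2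
  have hcsub : B *ᵥ zstar = c - A *ᵥ xstar := by
    rw [← hfeas]; abel
  simp only [Matrix.mulVec_sub, add_dotProduct, dotProduct_sub,
    dotProduct_add, hcsub] at *
  linarith
end
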